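/- If f : S^1 → [0,1] is a measurable function and k is a nonzero integer, then its Fourier coefficient cₖ(f) = (1/2π)∫₀^{2π} f(t)e^{ikt} dt satisfies |cₖ(f)| ≤ √2/π. -/

import Mathlib

open Real MeasureTheory intervalIntegral Complex

private lemma int_abs_cos_pi : ∫ x in (0:ℝ)..π, |Real.cos x| = 2 := by
  have hpi := Real.pi_pos
  have h1 : ∫ x in (0:ℝ)..(π/2), |Real.cos x| = 1 := by
    rw [intervalIntegral.integral_congr (g := Real.cos) ?_, integral_cos]
    · simp
    · intro x hx
      rw [Set.uIcc_of_le (by positivity)] at hx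
      exact abs_of_nonneg (Real.cos_nonneg_of_mem_Icc
        ⟨by linarith [hx.1], hx.2⟩)
  have h2 : ∫ x in (π/2:ℝ)..π, |Real.cos x| = 1 := by
    rw [intervalIntegral.integral_congr (g := fun x => -Real.cos x) ?_,
      intervalIntegral.integral_neg, integral_cos]
    · simp
    · intro x hx
      rw [Set.uIcc_of_le (by linarith)] at hx
      exact abs_of_nonpos (Real.cos_nonpos_of_pi_div_two_le_of_le hx.1 (by linarith [hx.2]))
  have := intervalIntegral.integral_add_adjacent_intervals
    (a := (0:ℝ)) (b := π/2) (c := π) (f := fun x => |Real.cos x|) (μ := volume)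
    (continuous_cos.abs.intervalIntegrable _ _) (continuous_cos.abs.intervalIntegrable _ _)
  rw [← this, h1, h2]; norm_num

private lemma int_abs_sin_pi : ∫ x in (0:ℝ)..π, |Real.sin x| = 2 := by
  rw [intervalIntegral.integral_congr (g := Real.sin) ?_, integral_sin]
  · norm_num
  · intro x hx
    rw [Set.uIcc_of_le Real.pi_pos.le] at hx
    exact abs_of_nonneg (Real.sin_nonneg_of_nonneg_of_le_pi hx.1 hx.2)

private lemma per_abs_cos : Function.Periodic (fun x => |Real.cos x|) π := fun x => by
  simp [Real.cos_add_pi]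

private lemma per_abs_sin : Function.Periodic (fun x => |Real.sin x|) π := fun x => by
  simp [Real.sin_add_pi]

private lemma key_abs (k : ℤ) (hk : k ≠ 0) (g : ℝ → ℝ) (hg : Continuous g)
    (hper : Function.Periodic g π) (hval : ∫ x in (0:ℝ)..π, g x = 2) :
    ∫ t in (0:ℝ)..(2*π), g ((k:ℝ)*t) = 4 := by
  have hk' : (k:ℝ) ≠ 0 := Int.cast_ne_zero.mpr hk
  rw [intervalIntegral.integral_comp_mul_left _ hk', mul_zero]
  have h2 : (k:ℝ) * (2*π) = 0 + (2*k) • π := by rw [zsmul_eq_mul]; push_cast; ring_nf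
  rw [h2, hper.intervalIntegral_add_zsmul_eq (2*k) 0
    (fun a b => hg.intervalIntegrable a b), zero_add, hval]
  field_simp
  linear_combination 4 * inv_mul_cancel₀ hk'

private lemma bound_int (f g : ℝ → ℝ) (hf : Measurable f)
    (hrange : ∀ t, f t ∈ Set.Icc (0:ℝ) 1) (hg : Continuous g)
    (habs : ∫ t in (0:ℝ)..(2*π), |g t| = 4) (hzero : ∫ t in (0:ℝ)..(2*π), g t = 0) :
    |∫ t in (0:ℝ)..(2*π), f t * g t| ≤ 2 := by
  have hpi := Real.pi_pos
  have hgi : IntervalIntegrable g volume 0 (2*π) := hg.intervalIntegrable _ _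
  have hai : IntervalIntegrable (fun t => |g t|) volume 0 (2*π) := hg.abs.intervalIntegrable _ _
  have hfg : IntervalIntegrable (fun t => f t * g t) volume 0 (2*π) := by
    rw [intervalIntegrable_iff] at hai ⊢
    refine hai.mono' ((hf.mul hg.measurable).aestronglyMeasurable) ?_
    filter_upwards with t
    rw [Real.norm_eq_abs, abs_mul]
    have := (hrange t).1; have := (hrange t).2
    nlinarith [abs_nonneg (g t), _root_.abs_of_nonneg (hrange t).1]
  have hub : ∫ t in (0:ℝ)..(2*π), f t * g t ≤ 2 := by
    have hle : ∫ t in (0:ℝ)..(2*π), f t * g t ≤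
        ∫ t in (0:ℝ)..(2*π), (g t + |g t|)/2 := by
      apply intervalIntegral.integral_mono_on (by linarith) hfg ((hgi.add hai).div_const 2)
      intro x _
      have h1 := (hrange x).1; have h2 := (hrange x).2
      rcases abs_cases (g x) with ⟨he, _⟩ | ⟨he, hneg⟩ <;> rw [he] <;> nlinarith
    rw [intervalIntegral.integral_div, intervalIntegral.integral_add hgi hai,
      hzero, habs, zero_add] at hle
    linarith
    
  have hlb : (-2:ℝ) ≤ ∫ t in (0:ℝ)..(2*π), f t * g t := by
    have hle : ∫ t in (0:ℝ)..(2*π), (g t - |g t|)/2 ≤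
        ∫ t in (0:ℝ)..(2*π), f t * g t := by
      apply intervalIntegral.integral_mono_on (by linarith) ((hgi.sub hai).div_const 2) hfg
      intro x _
      have h1 := (hrange x).1; have h2 := (hrange x).2
      rcases abs_cases (g x) with ⟨he, hpos⟩ | ⟨he, _⟩ <;> rw [he] <;> nlinarith
    rw [intervalIntegral.integral_div, intervalIntegral.integral_sub hgi hai,
      hzero, habs, zero_sub] at hle
    linarith
  exact abs_le.mpr ⟨hlb, hub⟩

/-- The Fourier coefficients `cₖ`, `k ≠ 0`, of a fuzzy subset of the circle
are bounded in modulus by `√2/π`. -/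
theorem fuzzy_fourier_coeff_le (f : ℝ → ℝ) (hf : Measurable f)
    (hrange : ∀ t, f t ∈ Set.Icc (0:ℝ) 1) (k : ℤ) (hk : k ≠ 0) :
    ‖(1/(2*π)) * ∫ t in (0:ℝ)..(2*π),
        (f t : ℂ) * Complex.exp (Complex.I * k * t)‖ ≤ Real.sqrt 2 / π := by
  have hpi := Real.pi_pos
  set z := ∫ t in (0:ℝ)..(2*π), (f t : ℂ) * Complex.exp (Complex.I * k * t) with hz
  have hrw : ∀ t : ℝ, Complex.I * k * t = (((k:ℝ)*t : ℝ) : ℂ) * Complex.I := by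
    intro t; push_cast; ring
  have hzint : IntervalIntegrable (fun t => (f t : ℂ) * Complex.exp (Complex.I * k * t))
      volume 0 (2*π) := by
    rw [intervalIntegrable_iff, Set.uIoc_of_le (by positivity)]
    refine Integrable.mono' (g := fun _ => (1:ℝ))
      (integrableOn_const measure_Ioc_lt_top.ne) ?_ ?_
    · exact ((Complex.measurable_ofReal.comp hf).mul
        ((Complex.continuous_exp.comp (by continuity)).measurable)).aestronglyMeasurable
    · filter_upwards with t
      rw [norm_mul, hrw t, Complex.norm_exp_ofReal_mul_I, mul_one, Complex.norm_real,
        Real.norm_eq_abs, _root_.abs_of_nonneg (hrange t).1]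
      exact (hrange t).2
  have hre : z.re = ∫ t in (0:ℝ)..(2*π), f t * Real.cos ((k:ℝ)*t) := by
    have := Complex.reCLM.intervalIntegral_comp_comm hzint
    rw [hz]
    rw [show (∫ t in (0:ℝ)..(2*π), (f t : ℂ) * Complex.exp (Complex.I * k * t)).re =
      Complex.reCLM (∫ t in (0:ℝ)..(2*π), (f t : ℂ) * Complex.exp (Complex.I * k * t)) from rfl,
      ← this]
    apply intervalIntegral.integral_congr
    intro t _
    show ((f t : ℂ) * Complex.exp (Complex.I * k * t)).re = f t * Real.cos ((k:ℝ)*t)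
    rw [hrw t]
    simp only [Complex.mul_re, Complex.ofReal_re, Complex.ofReal_im, zero_mul, sub_zero,
      Complex.exp_ofReal_mul_I_re]
  have him : z.im = ∫ t in (0:ℝ)..(2*π), f t * Real.sin ((k:ℝ)*t) := by
    have := Complex.imCLM.intervalIntegral_comp_comm hzint
    rw [hz]
    rw [show (∫ t in (0:ℝ)..(2*π), (f t : ℂ) * Complex.exp (Complex.I * k * t)).im =
      Complex.imCLM (∫ t in (0:ℝ)..(2*π), (f t : ℂ) * Complex.exp (Complex.I * k * t)) from rfl,
      ← this]
    apply intervalIntegral.integral_congr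
    intro t _
    show ((f t : ℂ) * Complex.exp (Complex.I * k * t)).im = f t * Real.sin ((k:ℝ)*t)
    rw [hrw t]
    simp only [Complex.mul_im, Complex.ofReal_re, Complex.ofReal_im, zero_mul, add_zero,
      Complex.exp_ofReal_mul_I_im]
  have hk' : (k:ℝ) ≠ 0 := Int.cast_ne_zero.mpr hk
  have hcos0 : ∫ t in (0:ℝ)..(2*π), Real.cos ((k:ℝ)*t) = 0 := by
    rw [intervalIntegral.integral_comp_mul_left _ hk', mul_zero, integral_cos]
    have : (k:ℝ) * (2*π) = (2*k : ℤ) * π := by push_cast; ring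
    rw [this, Real.sin_int_mul_pi]
    simp
  have hsin0 : ∫ t in (0:ℝ)..(2*π), Real.sin ((k:ℝ)*t) = 0 := by
    rw [intervalIntegral.integral_comp_mul_left _ hk', mul_zero, integral_sin]
    rw [Real.cos_int_mul_two_pi]
    simp
  have hcos4 : ∫ t in (0:ℝ)..(2*π), |Real.cos ((k:ℝ)*t)| = 4 :=
    key_abs k hk _ continuous_cos.abs per_abs_cos int_abs_cos_pi
  have hsin4 : ∫ t in (0:ℝ)..(2*π), |Real.sin ((k:ℝ)*t)| = 4 :=
    key_abs k hk _ continuous_sin.abs per_abs_sin int_abs_sin_pi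
  have h1 : |z.re| ≤ 2 := by
    rw [hre]
    exact bound_int f _ hf hrange (by fun_prop) hcos4 hcos0
  have h2 : |z.im| ≤ 2 := by
    rw [him]
    exact bound_int f _ hf hrange (by fun_prop) hsin4 hsin0
  have hzle : ‖z‖ ≤ 2 * Real.sqrt 2 := by
    rw [Complex.norm_def, Complex.normSq_apply]
    have e1 := abs_le.mp h1
    have e2 := abs_le.mp h2
    have h8 : z.re * z.re + z.im * z.im ≤ 8 := by nlinarith [e1.1, e1.2, e2.1, e2.2]
    calc Real.sqrt (z.re * z.re + z.im * z.im) ≤ Real.sqrt 8 := Real.sqrt_le_sqrt h8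
    _ = 2 * Real.sqrt 2 := by
        rw [show (8:ℝ) = 2^2 * 2 by norm_num, Real.sqrt_mul (by positivity),
          Real.sqrt_sq (by norm_num)]
  have habs1 : ‖((1:ℂ)/(2*π))‖ = 1/(2*π) := by
    rw [norm_div, norm_one, norm_mul, Complex.norm_two, Complex.norm_real,
      Real.norm_eq_abs, abs_of_pos hpi]
  rw [norm_mul, habs1]
  calc 1/(2*π) * ‖z‖ ≤ 1/(2*π) * (2 * Real.sqrt 2) := by
        apply mul_le_mul_of_nonneg_left hzle (by positivity)
  _ = Real.sqrt 2 / π := by field_simp
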